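/- Let (𝒳₁×𝒳₂, p(y|x₁,x₂), 𝒴) be a discrete memoryless multiple access channel, 𝒰 a finite set, δ ≥ 0, and p(u,x₁,x₂) a joint pmf with I(X₁;X₂|U) ≤ δ. Let H(Y|U,X₁,X₂) denote the conditional output entropy under p(u,x₁,x₂), and H_ind(Y|U,X₁,X₂) the conditional output entropy when the joint input law p(u,x₁,x₂) is replaced by p_ind(u,x₁,x₂) = p(u)p(x₁|u)p(x₂|u). Then |H(Y|U,X₁,X₂) − H_ind(Y|U,X₁,X₂)| ≤ (log₂|𝒴|)·√(2δ ln 2). -/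

import Mathlib

open scoped BigOperators

noncomputable section

/-- Shannon entropy (base 2) of a (sub)probability mass function on a finite type. -/
def ent2 {α : Type} [Fintype α] (p : α → ℝ) : ℝ :=
  -∑ a, p a * Real.logb 2 (p a)

/-- Conditional mutual information `I(A;B|U)` (in bits) of the joint pmf `p` on `U × A × B`,
given in curried form, computed as `H(A|U) + H(B|U) - H(A,B|U)`. -/
def condMI {U A B : Type} [Fintype U] [Fintype A] [Fintype B]
    (p : U → A → B → ℝ) : ℝ :=
  ent2 (fun ua : U × A => ∑ b, p ua.1 ua.2 b)
    + ent2 (fun ub : U × B => ∑ a, p ub.1 a ub.2)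
    - ent2 (fun uab : U × A × B => p uab.1 uab.2.1 uab.2.2)
    - ent2 (fun u : U => ∑ a, ∑ b, p u a b)

/-- `p` is a joint pmf on `U × A × B` (curried form). -/
def IsPMF3 {U A B : Type} [Fintype U] [Fintype A] [Fintype B] (p : U → A → B → ℝ) : Prop :=
  (∀ u a b, 0 ≤ p u a b) ∧ ∑ u, ∑ a, ∑ b, p u a b = 1

/-- A discrete memoryless multiple access channel with input alphabets `X1, X2` and
output alphabet `Y`. -/
structure MAC (X1 X2 Y : Type) [Fintype X1] [Fintype X2] [Fintype Y] where
  W : X1 → X2 → Y → ℝ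
  nonneg : ∀ x1 x2 y, 0 ≤ W x1 x2 y
  sum_one : ∀ x1 x2, ∑ y, W x1 x2 y = 1

variable {X1 X2 Y : Type} [Fintype X1] [Fintype X2] [Fintype Y]

/-- The set of values `(1/n) I(X₁ⁿ,X₂ⁿ;Yⁿ|U)` over all finite auxiliary alphabets `U`
(wlog `U = Fin k`) and all joint pmfs `p(u,x₁ⁿ,x₂ⁿ)` with `I(X₁ⁿ;X₂ⁿ|U) ≤ nδ`,
where `Yⁿ` is the output of the `n`-th extension of the MAC `M`. -/
def sigmaSet (M : MAC X1 X2 Y) (n : ℕ) (δ : ℝ) : Set ℝ :=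
  {r | ∃ (k : ℕ) (p : Fin k → (Fin n → X1) → (Fin n → X2) → ℝ),
    IsPMF3 p ∧ condMI p ≤ (n : ℝ) * δ ∧
    r = (1 / (n : ℝ)) *
      condMI (fun (u : Fin k) (x : (Fin n → X1) × (Fin n → X2)) (y : Fin n → Y) =>
        p u x.1 x.2 * ∏ t, M.W (x.1 t) (x.2 t) (y t)) }

/-- `σ_n(δ)`. -/
def sigmaN (M : MAC X1 X2 Y) (n : ℕ) (δ : ℝ) : ℝ := sSup (sigmaSet M n δ)

/-- `σ(δ) = lim_n σ_n(δ) = sup_n σ_n(δ)`. -/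
def sigmaF (M : MAC X1 X2 Y) (δ : ℝ) : ℝ := ⨆ n : ℕ, sigmaN M (n + 1) δ

/-- `⌊2^{nR}⌋`, the size of a message (or link) index set. -/
def msgSize (n : ℕ) (R : ℝ) : ℕ := ⌊(2 : ℝ) ^ ((n : ℝ) * R)⌋₊

/-- A `(2^{nR₁}, 2^{nR₂}, n)`-code for the MAC `M` with a
`((c1,c2),(d1,d2))`-cooperation facilitator. -/
structure Code (M : MAC X1 X2 Y) (n : ℕ) (R1 R2 c1 c2 d1 d2 : ℝ) where
  /-- encoder 1 to CF -/
  toCF1 : Fin (msgSize n R1) → Fin (msgSize n c1)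
  /-- encoder 2 to CF -/
  toCF2 : Fin (msgSize n R2) → Fin (msgSize n c2)
  /-- CF to encoder 1 -/
  cf1 : Fin (msgSize n c1) → Fin (msgSize n c2) → Fin (msgSize n d1)
  /-- CF to encoder 2 -/
  cf2 : Fin (msgSize n c1) → Fin (msgSize n c2) → Fin (msgSize n d2)
  /-- encoder 1 -/
  f1 : Fin (msgSize n R1) → Fin (msgSize n d1) → Fin n → X1
  /-- encoder 2 -/
  f2 : Fin (msgSize n R2) → Fin (msgSize n d2) → Fin n → X2
  /-- decoder -/
  dec : (Fin n → Y) → Fin (msgSize n R1) × Fin (msgSize n R2)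

/-- The error probability `λ_n(w₁,w₂)` of the code `C` on the message pair `(w₁,w₂)`. -/
def errProb {M : MAC X1 X2 Y} {n : ℕ} {R1 R2 c1 c2 d1 d2 : ℝ}
    (C : Code M n R1 R2 c1 c2 d1 d2)
    (w1 : Fin (msgSize n R1)) (w2 : Fin (msgSize n R2)) : ℝ :=
  ∑ y : Fin n → Y,
    if C.dec y ≠ (w1, w2) then
      ∏ t, M.W (C.f1 w1 (C.cf1 (C.toCF1 w1) (C.toCF2 w2)) t)
               (C.f2 w2 (C.cf2 (C.toCF1 w1) (C.toCF2 w2)) t) (y t)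
    else 0

/-- Average error probability of a code. -/
def avgErr {M : MAC X1 X2 Y} {n : ℕ} {R1 R2 c1 c2 d1 d2 : ℝ}
    (C : Code M n R1 R2 c1 c2 d1 d2) : ℝ :=
  (1 / (2 : ℝ) ^ ((n : ℝ) * (R1 + R2))) * ∑ w1, ∑ w2, errProb C w1 w2

/-- Maximal error probability of a code. -/
def maxErr {M : MAC X1 X2 Y} {n : ℕ} {R1 R2 c1 c2 d1 d2 : ℝ}
    (C : Code M n R1 R2 c1 c2 d1 d2) : ℝ :=
  sSup {e | ∃ w1 w2, e = errProb C w1 w2}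

/-- `(R₁,R₂)` is achievable under the average-error criterion for the MAC `M` with a
`((c1,c2),(d1,d2))`-CF. -/
def AchievableAvg (M : MAC X1 X2 Y) (c1 c2 d1 d2 : ℝ) (R : ℝ × ℝ) : Prop :=
  0 ≤ R.1 ∧ 0 ≤ R.2 ∧
  ∃ C : (n : ℕ) → Code M (n + 1) R.1 R.2 c1 c2 d1 d2,
    Filter.Tendsto (fun n => avgErr (C n)) Filter.atTop (nhds 0)

/-- `(R₁,R₂)` is achievable under the maximal-error criterion. -/
def AchievableMax (M : MAC X1 X2 Y) (c1 c2 d1 d2 : ℝ) (R : ℝ × ℝ) : Prop :=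
  0 ≤ R.1 ∧ 0 ≤ R.2 ∧
  ∃ C : (n : ℕ) → Code M (n + 1) R.1 R.2 c1 c2 d1 d2,
    Filter.Tendsto (fun n => maxErr (C n)) Filter.atTop (nhds 0)

/-- Average-error sum-capacity `C_sum,avg(C_in, C_out)`. -/
def CsumAvg (M : MAC X1 X2 Y) (Cin Cout : ℝ × ℝ) : ℝ :=
  sSup {s | ∃ R ∈ closure {R : ℝ × ℝ | AchievableAvg M Cin.1 Cin.2 Cout.1 Cout.2 R},
    s = R.1 + R.2}

/-- Maximal-error sum-capacity `C_sum,max(C_in, C_out)`. -/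
def CsumMax (M : MAC X1 X2 Y) (Cin Cout : ℝ × ℝ) : ℝ :=
  sSup {s | ∃ R ∈ closure {R : ℝ × ℝ | AchievableMax M Cin.1 Cin.2 Cout.1 Cout.2 R},
    s = R.1 + R.2}

/-- `max_{p(x₁,x₂)} I(X₁,X₂;Y)`, used to specify when CF input links are large enough
that the CF has full knowledge of both messages. -/
def maxMI (M : MAC X1 X2 Y) : ℝ :=
  sSup {r | ∃ p : X1 × X2 → ℝ, (∀ x, 0 ≤ p x) ∧ (∑ x, p x = 1) ∧
    r = condMI (fun (_ : Unit) (x : X1 × X2) (y : Y) => p x * M.W x.1 x.2 y)}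

end

/-- `H(Y|X₁=x₁,X₂=x₂) = −∑_y p(y|x₁,x₂) log₂ p(y|x₁,x₂)`. -/
noncomputable def chOutEnt {X1 X2 Y : Type} [Fintype X1] [Fintype X2] [Fintype Y]
    (M : MAC X1 X2 Y) (x1 : X1) (x2 : X2) : ℝ :=
  -∑ y, M.W x1 x2 y * Real.logb 2 (M.W x1 x2 y)

private lemma hasDerivAt_F (t : ℝ) (ht : 0 < t) :
    HasDerivAt (fun t : ℝ => Real.log t - 2*(t-1)/(t+1)) (1/t - 4/(t+1)^2) t := by
  have h1 : HasDerivAt Real.log t⁻¹ t := Real.hasDerivAt_log (ne_of_gt ht)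
  have hd : HasDerivAt (fun t : ℝ => 2*(t-1)) 2 t := by
    simpa using ((hasDerivAt_id t).sub_const (1:ℝ)).const_mul (2:ℝ)
  have hd2 : HasDerivAt (fun t : ℝ => t+1) 1 t := (hasDerivAt_id t).add_const 1
  have h2 := hd.div hd2 (by linarith : t + 1 ≠ 0)
  have : HasDerivAt (fun t : ℝ => Real.log t - 2*(t-1)/(t+1))
      (t⁻¹ - (2*(t+1) - 2*(t-1)*1)/(t+1)^2) t := h1.sub h2
  convert this using 1
  have h3 : t + 1 ≠ 0 := by linarith
  field_simp
  ring

private lemma log_pade_ge {t : ℝ} (ht : 1 ≤ t) : 2*(t-1)/(t+1) ≤ Real.log t := by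
  have hmono : MonotoneOn (fun t : ℝ => Real.log t - 2*(t-1)/(t+1)) (Set.Ici 1) := by
    apply monotoneOn_of_deriv_nonneg (convex_Ici 1)
    · apply ContinuousOn.sub
      · exact Real.continuousOn_log.mono (by intro x hx; simp at hx ⊢; intro h; linarith)
      · apply ContinuousOn.div (by fun_prop) (by fun_prop)
        intro x hx; simp at hx; intro h; linarith
    · intro x hx
      rw [interior_Ici] at hx
      exact ((hasDerivAt_F x (by linarith [hx.out])).differentiableAt).differentiableWithinAt
    · intro x hx
      rw [interior_Ici] at hx
      have hx1 : (1:ℝ) < x := hx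
      rw [(hasDerivAt_F x (by linarith)).deriv]
      rw [sub_nonneg, div_le_div_iff₀ (by positivity) (by positivity)]
      nlinarith [sq_nonneg (x-1)]
  have := hmono (Set.self_mem_Ici) (Set.mem_Ici.2 ht) ht
  simp at this
  linarith

private lemma log_pade_le {t : ℝ} (ht0 : 0 < t) (ht : t ≤ 1) : Real.log t ≤ 2*(t-1)/(t+1) := by
  have hmono : MonotoneOn (fun t : ℝ => Real.log t - 2*(t-1)/(t+1)) (Set.Ioc 0 1) := by
    apply monotoneOn_of_deriv_nonneg (convex_Ioc 0 1)
    · apply ContinuousOn.sub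
      · exact Real.continuousOn_log.mono (by intro x hx; simp at hx ⊢; intro h; linarith [hx.1])
      · apply ContinuousOn.div (by fun_prop) (by fun_prop)
        intro x hx; simp at hx; intro h; linarith [hx.1]
    · intro x hx
      rw [interior_Ioc] at hx
      exact ((hasDerivAt_F x hx.1).differentiableAt).differentiableWithinAt
    · intro x hx
      rw [interior_Ioc] at hx
      have hx0 : (0:ℝ) < x := hx.1
      have hx1 : (0:ℝ) < (x+1)^2 := by positivity
      rw [(hasDerivAt_F x hx0).deriv]
      rw [sub_nonneg, div_le_div_iff₀ hx1 hx0]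
      nlinarith [sq_nonneg (x-1)]
  have := hmono (Set.mem_Ioc.2 ⟨ht0, ht⟩) (Set.mem_Ioc.2 ⟨one_pos, le_refl 1⟩) ht
  simp at this
  linarith

private lemma hasDerivAt_G (t : ℝ) (ht : 0 < t) :
    HasDerivAt (fun t : ℝ => t * Real.log t - t + 1 - (3/2)*(t-1)^2/(t+2))
      (Real.log t - (3/2)*((t-1)*(t+5))/(t+2)^2) t := by
  have h1 : HasDerivAt (fun t : ℝ => t * Real.log t) (Real.log t + 1) t :=
    Real.hasDerivAt_mul_log (ne_of_gt ht)
  have hd : HasDerivAt (fun t : ℝ => (3/2)*(t-1)^2) ((3/2)*(2*(t-1))) t := by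
    exact (((hasDerivAt_id t).sub_const (1:ℝ)).pow 2).const_mul (3/2) |>.congr_deriv (by simp only [id_eq]; ring)
  have hd2 : HasDerivAt (fun t : ℝ => t+2) 1 t := (hasDerivAt_id t).add_const 2
  have h2 := hd.div hd2 (by linarith : t + 2 ≠ 0)
  have h3 := ((h1.sub (hasDerivAt_id t)).add_const 1).sub h2
  convert h3 using 1
  have h4 : t + 2 ≠ 0 := by linarith
  try simp only [id_eq]
  · rfl
  · rfl
  · rfl
  · ring

private lemma key_ineq {t : ℝ} (ht : 0 ≤ t) :
    (3/2)*(t-1)^2/(t+2) ≤ t * Real.log t - t + 1 := by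
  rcases eq_or_lt_of_le ht with h0 | ht0
  · rw [← h0]; norm_num
  have hG1 : ∀ x : ℝ, 1 ≤ x →
      0 ≤ x * Real.log x - x + 1 - (3/2)*(x-1)^2/(x+2) := by
    intro x hx
    have hmono : MonotoneOn (fun t : ℝ => t * Real.log t - t + 1 - (3/2)*(t-1)^2/(t+2))
        (Set.Ici 1) := by
      apply monotoneOn_of_deriv_nonneg (convex_Ici 1)
      · refine ((Real.continuous_mul_log.continuousOn.sub continuous_id.continuousOn).add
          continuousOn_const).sub (ContinuousOn.div (by fun_prop) (by fun_prop) ?_)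
        intro z hz; simp only [Set.mem_Ici] at hz; intro h; linarith
      · intro z hz
        rw [interior_Ici] at hz
        exact ((hasDerivAt_G z (by linarith [hz.out])).differentiableAt).differentiableWithinAt
      · intro z hz
        rw [interior_Ici] at hz
        have hz1 : (1:ℝ) < z := hz
        rw [(hasDerivAt_G z (by linarith)).deriv]
        have hp : (3/2)*((z-1)*(z+5))/(z+2)^2 ≤ 2*(z-1)/(z+1) := by
          rw [div_le_div_iff₀ (by positivity) (by positivity)]
          nlinarith [sq_nonneg (z-1)]
        linarith [log_pade_ge (le_of_lt hz1)]
    have h10 := hmono Set.self_mem_Ici (Set.mem_Ici.2 hx) hx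
    simp only [Real.log_one] at h10
    norm_num at h10
    linarith
  rcases le_or_gt 1 t with h1 | h1
  · linarith [hG1 t h1]
  · have hmono : AntitoneOn (fun t : ℝ => t * Real.log t - t + 1 - (3/2)*(t-1)^2/(t+2))
        (Set.Ioc 0 1) := by
      apply antitoneOn_of_deriv_nonpos (convex_Ioc 0 1)
      · refine ((Real.continuous_mul_log.continuousOn.sub continuous_id.continuousOn).add
          continuousOn_const).sub (ContinuousOn.div (by fun_prop) (by fun_prop) ?_)
        intro z hz; intro h; linarith [hz.1]
      · intro z hz
        rw [interior_Ioc] at hz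
        exact ((hasDerivAt_G z hz.1).differentiableAt).differentiableWithinAt
      · intro z hz
        rw [interior_Ioc] at hz
        have hz0 : (0:ℝ) < z := hz.1
        have hz1 : z < 1 := hz.2
        rw [(hasDerivAt_G z hz0).deriv]
        have hp : 2*(z-1)/(z+1) ≤ (3/2)*((z-1)*(z+5))/(z+2)^2 := by
          rw [div_le_div_iff₀ (by positivity) (by positivity)]
          nlinarith [sq_nonneg (z-1)]
        linarith [log_pade_le hz0 (le_of_lt hz1)]
    have h10 := hmono (Set.mem_Ioc.2 ⟨ht0, le_of_lt h1⟩)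
      (Set.mem_Ioc.2 ⟨one_pos, le_refl 1⟩) (le_of_lt h1)
    simp only [Real.log_one] at h10
    norm_num at h10
    linarith

/-- Pointwise lower bound used in Pinsker's inequality. -/
private lemma key_ineq_xy {x y : ℝ} (hx : 0 ≤ x) (hy : 0 < y) :
    (3/2)*(x-y)^2/(x+2*y) ≤ x * Real.log (x/y) - x + y := by
  have ht : 0 ≤ x / y := by positivity
  have h := key_ineq ht
  have h2 := mul_le_mul_of_nonneg_left h (le_of_lt hy)
  have hy' : y ≠ 0 := ne_of_gt hy
  have hxy : (0:ℝ) < x + 2*y := by positivity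
  have e1 : y * ((3/2)*(x/y-1)^2/(x/y+2)) = (3/2)*(x-y)^2/(x+2*y) := by
    field_simp
  have e2 : y * (x/y * Real.log (x/y) - x/y + 1) = x * Real.log (x/y) - x + y := by
    field_simp
  rw [e1, e2] at h2
  exact h2

private lemma pinsker {ι : Type*} [Fintype ι] (p q : ι → ℝ)
    (hp0 : ∀ i, 0 ≤ p i) (hq0 : ∀ i, 0 ≤ q i)
    (hp1 : ∑ i, p i = 1) (hq1 : ∑ i, q i = 1)
    (hac : ∀ i, q i = 0 → p i = 0) :
    (∑ i, |p i - q i|)^2 ≤ 2 * ∑ i, p i * Real.log (p i / q i) := by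
  have key : ∀ i, (3/2)*(p i - q i)^2/(p i + 2 * q i)
      ≤ p i * Real.log (p i / q i) - p i + q i := by
    intro i
    rcases eq_or_lt_of_le (hq0 i) with h0 | h0
    · have hpi := hac i h0.symm
      rw [hpi, ← h0]
      norm_num
    · exact key_ineq_xy (hp0 i) h0
  have hsum : ∑ i, ((3/2)*(p i - q i)^2/(p i + 2 * q i))
      ≤ ∑ i, p i * Real.log (p i / q i) := by
    calc ∑ i, ((3/2)*(p i - q i)^2/(p i + 2 * q i))
        ≤ ∑ i, (p i * Real.log (p i / q i) - p i + q i) :=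
          Finset.sum_le_sum (fun i _ => key i)
      _ = ∑ i, p i * Real.log (p i / q i) := by
          rw [Finset.sum_add_distrib, Finset.sum_sub_distrib, hp1, hq1]
          ring
  have hCS := Finset.sum_mul_sq_le_sq_mul_sq Finset.univ
    (fun i => |p i - q i| / Real.sqrt (p i + 2 * q i))
    (fun i => Real.sqrt (p i + 2 * q i))
  have e1 : ∀ i : ι, |p i - q i| / Real.sqrt (p i + 2 * q i) * Real.sqrt (p i + 2 * q i)
      = |p i - q i| := by
    intro i
    rcases eq_or_lt_of_le (add_nonneg (hp0 i) (by linarith [hq0 i] : (0:ℝ) ≤ 2 * q i)) with h | h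
    · have hp' : p i = 0 := by linarith [hp0 i, hq0 i]
      have hq' : q i = 0 := by linarith [hq0 i, hp0 i]
      simp [hp', hq']
    · exact div_mul_cancel₀ _ (ne_of_gt (Real.sqrt_pos.2 h))
  have e2 : ∀ i : ι, (|p i - q i| / Real.sqrt (p i + 2 * q i))^2
      = (p i - q i)^2 / (p i + 2 * q i) := by
    intro i
    rcases eq_or_lt_of_le (add_nonneg (hp0 i) (by linarith [hq0 i] : (0:ℝ) ≤ 2 * q i)) with h | h
    · have hp' : p i = 0 := by linarith [hp0 i, hq0 i]
      have hq' : q i = 0 := by linarith [hq0 i, hp0 i]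
      simp [hp', hq']
    · rw [div_pow, sq_abs, Real.sq_sqrt (le_of_lt h)]
  have e3 : ∀ i : ι, (Real.sqrt (p i + 2 * q i))^2 = p i + 2 * q i := by
    intro i
    exact Real.sq_sqrt (add_nonneg (hp0 i) (by linarith [hq0 i]))
  simp only [e1, e2, e3] at hCS
  have e4 : ∑ i, (p i + 2 * q i) = 3 := by
    rw [Finset.sum_add_distrib, ← Finset.mul_sum, hp1, hq1]; norm_num
  rw [e4] at hCS
  have e5 : ∑ i, (p i - q i)^2 / (p i + 2 * q i)
      = (2/3) * ∑ i, ((3/2)*(p i - q i)^2/(p i + 2 * q i)) := by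
    rw [Finset.mul_sum]
    apply Finset.sum_congr rfl
    intro i _
    ring
  calc (∑ i, |p i - q i|)^2 ≤ (∑ i, (p i - q i)^2 / (p i + 2 * q i)) * 3 := hCS
    _ = 2 * ∑ i, ((3/2)*(p i - q i)^2/(p i + 2 * q i)) := by rw [e5]; ring
    _ ≤ 2 * ∑ i, p i * Real.log (p i / q i) := by linarith [hsum]

private lemma log2_mul_ent2 {γ : Type} [Fintype γ] (f : γ → ℝ) :
    Real.log 2 * ent2 f = -∑ x, f x * Real.log (f x) := by
  rw [ent2, mul_neg, Finset.mul_sum, neg_inj]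
  refine Finset.sum_congr rfl fun x _ => ?_
  have h2 : Real.log 2 ≠ 0 := ne_of_gt (Real.log_pos one_lt_two)
  rw [Real.logb]
  field_simp

private lemma condMI_identity {U A B : Type} [Fintype U] [Fintype A] [Fintype B]
    (p : U → A → B → ℝ) (h0 : ∀ u a b, 0 ≤ p u a b) :
    Real.log 2 * condMI p = ∑ u, ∑ a, ∑ b, p u a b *
      Real.log (p u a b /
        ((∑ a', ∑ b', p u a' b') * ((∑ b', p u a b') / (∑ a', ∑ b', p u a' b'))
          * ((∑ a', p u a' b) / (∑ a', ∑ b', p u a' b')))) := by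
  have hpA0 : ∀ u a, 0 ≤ ∑ b, p u a b := fun u a => Finset.sum_nonneg fun b _ => h0 u a b
  have hpB0 : ∀ u b, 0 ≤ ∑ a, p u a b := fun u b => Finset.sum_nonneg fun a _ => h0 u a b
  have hterm : ∀ u a b, p u a b *
      Real.log (p u a b /
        ((∑ a', ∑ b', p u a' b') * ((∑ b', p u a b') / (∑ a', ∑ b', p u a' b'))
          * ((∑ a', p u a' b) / (∑ a', ∑ b', p u a' b'))))
      = p u a b * Real.log (p u a b) + p u a b * Real.log (∑ a', ∑ b', p u a' b')
        - p u a b * Real.log (∑ b', p u a b') - p u a b * Real.log (∑ a', p u a' b) := by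
    intro u a b
    rcases eq_or_lt_of_le (h0 u a b) with h | h
    · rw [← h]; ring
    · have hA : 0 < ∑ b', p u a b' :=
        lt_of_lt_of_le h (Finset.single_le_sum (fun b' _ => h0 u a b') (Finset.mem_univ b))
      have hB : 0 < ∑ a', p u a' b :=
        lt_of_lt_of_le h (Finset.single_le_sum (fun a' _ => h0 u a' b) (Finset.mem_univ a))
      have hU : 0 < ∑ a', ∑ b', p u a' b' :=
        lt_of_lt_of_le hA (Finset.single_le_sum (fun a' _ => hpA0 u a') (Finset.mem_univ a))
      have hq : (∑ a', ∑ b', p u a' b') * ((∑ b', p u a b') / (∑ a', ∑ b', p u a' b'))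
          * ((∑ a', p u a' b) / (∑ a', ∑ b', p u a' b'))
          = (∑ b', p u a b') * (∑ a', p u a' b) / (∑ a', ∑ b', p u a' b') := by
        field_simp
      have hq2 : p u a b / ((∑ b', p u a b') * (∑ a', p u a' b) / (∑ a', ∑ b', p u a' b'))
          = p u a b * (∑ a', ∑ b', p u a' b') / ((∑ b', p u a b') * (∑ a', p u a' b)) := by
        field_simp
      rw [hq, hq2, Real.log_div (by positivity) (by positivity),
        Real.log_mul (ne_of_gt h) (ne_of_gt hU), Real.log_mul (ne_of_gt hA) (ne_of_gt hB)]
      ring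
  simp_rw [hterm]
  have E2 : ∀ u, ∑ a, ∑ b, p u a b * Real.log (∑ a', ∑ b', p u a' b')
      = (∑ a', ∑ b', p u a' b') * Real.log (∑ a', ∑ b', p u a' b') := by
    intro u; simp_rw [← Finset.sum_mul]
  have E3 : ∀ u a, ∑ b, p u a b * Real.log (∑ b', p u a b')
      = (∑ b', p u a b') * Real.log (∑ b', p u a b') := by
    intro u a; rw [← Finset.sum_mul]
  have E4 : ∀ u, ∑ a, ∑ b, p u a b * Real.log (∑ a', p u a' b)
      = ∑ b, (∑ a', p u a' b) * Real.log (∑ a', p u a' b) := by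
    intro u
    rw [Finset.sum_comm]
    exact Finset.sum_congr rfl fun b _ => by rw [← Finset.sum_mul]
  have A2 : ∑ u, ∑ a, ∑ b, p u a b * Real.log (∑ a', ∑ b', p u a' b')
      = ∑ u, (∑ a', ∑ b', p u a' b') * Real.log (∑ a', ∑ b', p u a' b') :=
    Finset.sum_congr rfl fun u _ => E2 u
  have A3 : ∑ u, ∑ a, ∑ b, p u a b * Real.log (∑ b', p u a b')
      = ∑ u, ∑ a, (∑ b', p u a b') * Real.log (∑ b', p u a b') :=
    Finset.sum_congr rfl fun u _ => Finset.sum_congr rfl fun a _ => E3 u a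
  have A4 : ∑ u, ∑ a, ∑ b, p u a b * Real.log (∑ a', p u a' b)
      = ∑ u, ∑ b, (∑ a', p u a' b) * Real.log (∑ a', p u a' b) :=
    Finset.sum_congr rfl fun u _ => E4 u
  simp_rw [Finset.sum_sub_distrib, Finset.sum_add_distrib]
  rw [A2, A3, A4]
  rw [condMI, mul_sub, mul_sub, mul_add, log2_mul_ent2, log2_mul_ent2, log2_mul_ent2,
    log2_mul_ent2]
  simp only [Fintype.sum_prod_type]
  ring

private lemma ent_nonneg {Y : Type} [Fintype Y] (w : Y → ℝ) (h0 : ∀ y, 0 ≤ w y)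
    (h1 : ∑ y, w y = 1) : 0 ≤ -∑ y, w y * Real.logb 2 (w y) := by
  rw [neg_nonneg]
  apply Finset.sum_nonpos
  intro y _
  have hle : w y ≤ 1 := by
    rw [← h1]
    exact Finset.single_le_sum (fun y' _ => h0 y') (Finset.mem_univ y)
  exact mul_nonpos_of_nonneg_of_nonpos (h0 y) (Real.logb_nonpos one_lt_two (h0 y) hle)

private lemma ent_le_card {Y : Type} [Fintype Y] (w : Y → ℝ) (h0 : ∀ y, 0 ≤ w y)
    (h1 : ∑ y, w y = 1) :
    -∑ y, w y * Real.logb 2 (w y) ≤ Real.logb 2 (Fintype.card Y : ℝ) := by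
  have hNE : Nonempty Y := by
    by_contra h
    rw [not_nonempty_iff] at h
    rw [Finset.univ_eq_empty, Finset.sum_empty] at h1
    norm_num at h1
  have hn : (0:ℝ) < (Fintype.card Y : ℝ) := by
    exact_mod_cast Fintype.card_pos
  set n : ℝ := (Fintype.card Y : ℝ) with hndef
  have term : ∀ y, -(w y * Real.log (w y)) ≤ 1/n - w y + w y * Real.log n := by
    intro y
    rcases eq_or_lt_of_le (h0 y) with h | h
    · rw [← h]; simp; positivity
    · have hl := Real.log_le_sub_one_of_pos (show 0 < (n * w y)⁻¹ by positivity)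
      rw [Real.log_inv] at hl
      have h2 := mul_le_mul_of_nonneg_left hl (le_of_lt h)
      rw [Real.log_mul (ne_of_gt hn) (ne_of_gt h)] at h2
      have h3 : w y * ((n * w y)⁻¹ - 1) = 1/n - w y := by
        field_simp
      have h4 : w y * (-(Real.log n + Real.log (w y)))
          = -(w y * Real.log n) - w y * Real.log (w y) := by ring
      rw [h3, h4] at h2
      linarith
  have hnat : -∑ y, w y * Real.log (w y) ≤ Real.log n := by
    have hs : ∑ y, (1/n - w y + w y * Real.log n) = Real.log n := by
      rw [Finset.sum_add_distrib, Finset.sum_sub_distrib, ← Finset.sum_mul, h1,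
        Finset.sum_const, Finset.card_univ]
      have : (Fintype.card Y : ℝ) * (1/n) = 1 := by
        rw [hndef]; field_simp
      simp only [nsmul_eq_mul]
      rw [this]
      ring
    calc -∑ y, w y * Real.log (w y) = ∑ y, -(w y * Real.log (w y)) := by
          rw [Finset.sum_neg_distrib]
      _ ≤ ∑ y, (1/n - w y + w y * Real.log n) := Finset.sum_le_sum fun y _ => term y
      _ = Real.log n := hs
  have hlog2 : (0:ℝ) < Real.log 2 := Real.log_pos one_lt_two
  simp_rw [Real.logb, mul_div_assoc']
  rw [← Finset.sum_div, ← neg_div]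
  exact (div_le_div_iff_of_pos_right hlog2).2 hnat

/-- If `I(X₁;X₂|U) ≤ δ` (in bits), then
`|H(Y|U,X₁,X₂) − H_ind(Y|U,X₁,X₂)| ≤ (log₂|𝒴|)·√(2δ ln 2)`, where
`H_q(Y|U,X₁,X₂) = ∑ q(u,x₁,x₂) H(Y|X₁=x₁,X₂=x₂)` and
`p_ind(u,x₁,x₂) = p(u)p(x₁|u)p(x₂|u)`. -/
theorem condEntropy_givenInputs_diff_bound
    {U X1 X2 Y : Type} [Fintype U] [Fintype X1] [Fintype X2] [Fintype Y]
    (M : MAC X1 X2 Y) (δ : ℝ) (hδ : 0 ≤ δ)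
    (p : U → X1 → X2 → ℝ) (hp : IsPMF3 p) (hMI : condMI p ≤ δ) :
    |(∑ u, ∑ x1, ∑ x2, p u x1 x2 * chOutEnt M x1 x2) -
        (∑ u, ∑ x1, ∑ x2,
          (∑ a, ∑ b, p u a b) *
            ((∑ b, p u x1 b) / (∑ a, ∑ b, p u a b)) *
            ((∑ a, p u a x2) / (∑ a, ∑ b, p u a b)) * chOutEnt M x1 x2)| ≤
      Real.logb 2 (Fintype.card Y : ℝ) * Real.sqrt (2 * δ * Real.log 2) := by
  obtain ⟨h0, h1⟩ := hp
  rcases isEmpty_or_nonempty Y with hY | hY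
  · have hcard : (Fintype.card Y : ℝ) = 0 := by
      rw [Fintype.card_eq_zero]
      norm_num
    have hch : ∀ x1 x2, chOutEnt M x1 x2 = 0 := by
      intro x1 x2
      rw [chOutEnt, Finset.univ_eq_empty, Finset.sum_empty, neg_zero]
    simp only [hch, mul_zero, Finset.sum_const_zero, sub_zero, abs_zero, hcard,
      Real.logb_zero, zero_mul]
    exact le_refl 0
  -- main case
  have hlog2 : (0 : ℝ) < Real.log 2 := Real.log_pos one_lt_two
  have hcard1 : (1 : ℝ) ≤ (Fintype.card Y : ℝ) := by exact_mod_cast Fintype.card_pos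
  set L : ℝ := Real.logb 2 (Fintype.card Y : ℝ) with hLdef
  have hL0 : 0 ≤ L := Real.logb_nonneg one_lt_two hcard1
  have hf0 : ∀ x1 x2, 0 ≤ chOutEnt M x1 x2 := fun x1 x2 =>
    ent_nonneg (M.W x1 x2) (M.nonneg x1 x2) (M.sum_one x1 x2)
  have hfL : ∀ x1 x2, chOutEnt M x1 x2 ≤ L := fun x1 x2 =>
    ent_le_card (M.W x1 x2) (M.nonneg x1 x2) (M.sum_one x1 x2)
  set P : U × X1 × X2 → ℝ := fun x => p x.1 x.2.1 x.2.2 with hPdef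
  set Q : U × X1 × X2 → ℝ := fun x =>
    (∑ a, ∑ b, p x.1 a b) * ((∑ b, p x.1 x.2.1 b) / (∑ a, ∑ b, p x.1 a b)) *
      ((∑ a, p x.1 a x.2.2) / (∑ a, ∑ b, p x.1 a b)) with hQdef
  have hP0 : ∀ x, 0 ≤ P x := fun x => h0 _ _ _
  have hpA0 : ∀ u a, 0 ≤ ∑ b, p u a b := fun u a => Finset.sum_nonneg fun b _ => h0 u a b
  have hpB0 : ∀ u b, 0 ≤ ∑ a, p u a b := fun u b => Finset.sum_nonneg fun a _ => h0 u a b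
  have hpU0 : ∀ u, 0 ≤ ∑ a, ∑ b, p u a b := fun u =>
    Finset.sum_nonneg fun a _ => hpA0 u a
  have hQ0 : ∀ x, 0 ≤ Q x := by
    intro x
    apply mul_nonneg (mul_nonneg (hpU0 x.1) _) _
    · exact div_nonneg (hpA0 x.1 x.2.1) (hpU0 x.1)
    · exact div_nonneg (hpB0 x.1 x.2.2) (hpU0 x.1)
  have hP1 : ∑ x, P x = 1 := by
    simp only [hPdef, Fintype.sum_prod_type]
    exact h1
  have hQsum : ∀ u, (∑ a, ∑ b, (fun a b => Q (u, a, b)) a b) = ∑ a, ∑ b, p u a b := by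
    intro u
    rcases eq_or_lt_of_le (hpU0 u) with hU | hU
    · have hz : ∀ a b, p u a b = 0 := by
        intro a b
        have h' := (Finset.sum_eq_zero_iff_of_nonneg
          (fun a' _ => hpA0 u a')).1 hU.symm a (Finset.mem_univ a)
        exact (Finset.sum_eq_zero_iff_of_nonneg
          (fun b' _ => h0 u a b')).1 h' b (Finset.mem_univ b)
      simp only [hQdef]
      simp [hz]
    · have hU' : (∑ a, ∑ b, p u a b) ≠ 0 := ne_of_gt hU
      have hBtot : ∑ b, ∑ a, p u a b = ∑ a, ∑ b, p u a b := Finset.sum_comm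
      simp only [hQdef]
      have hQ' : ∀ a b, (∑ a', ∑ b', p u a' b') *
          ((∑ b', p u a b') / (∑ a', ∑ b', p u a' b')) *
          ((∑ a', p u a' b) / (∑ a', ∑ b', p u a' b'))
          = (∑ b', p u a b') * ((∑ a', p u a' b) / (∑ a', ∑ b', p u a' b')) := by
        intro a b
        field_simp
      simp_rw [hQ']
      calc ∑ a, ∑ b, (∑ b', p u a b') * ((∑ a', p u a' b) / (∑ a', ∑ b', p u a' b'))
          = ∑ a, (∑ b', p u a b') * ((∑ b, ∑ a', p u a' b) / (∑ a', ∑ b', p u a' b')) := by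
            refine Finset.sum_congr rfl fun a _ => ?_
            rw [← Finset.mul_sum, ← Finset.sum_div]
        _ = ∑ a, ∑ b', p u a b' := by
            refine Finset.sum_congr rfl fun a _ => ?_
            rw [hBtot, div_self hU', mul_one]
  have hQ1 : ∑ x, Q x = 1 := by
    simp only [Fintype.sum_prod_type]
    calc ∑ u, ∑ a, ∑ b, Q (u, a, b) = ∑ u, ∑ a, ∑ b, p u a b :=
          Finset.sum_congr rfl fun u _ => hQsum u
      _ = 1 := h1
  have hac : ∀ x, Q x = 0 → P x = 0 := by
    intro x hQx
    by_contra hPx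
    have hPpos : 0 < P x := lt_of_le_of_ne (hP0 x) (Ne.symm hPx)
    obtain ⟨u, a, b⟩ := x
    have hA : 0 < ∑ b', p u a b' :=
      lt_of_lt_of_le hPpos (Finset.single_le_sum (fun b' _ => h0 u a b') (Finset.mem_univ b))
    have hB : 0 < ∑ a', p u a' b :=
      lt_of_lt_of_le hPpos (Finset.single_le_sum (fun a' _ => h0 u a' b) (Finset.mem_univ a))
    have hU : 0 < ∑ a', ∑ b', p u a' b' :=
      lt_of_lt_of_le hA (Finset.single_le_sum (fun a' _ => hpA0 u a') (Finset.mem_univ a))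
    have : 0 < Q (u, a, b) := by
      simp only [hQdef]
      positivity
    simp only [hQx] at this
    exact lt_irrefl 0 this
  have hpin := pinsker P Q hP0 hQ0 hP1 hQ1 hac
  have hKL : ∑ x, P x * Real.log (P x / Q x) = Real.log 2 * condMI p := by
    rw [condMI_identity p h0]
    simp only [hPdef, hQdef, Fintype.sum_prod_type]
  have hD : (∑ x, |P x - Q x|) ^ 2 ≤ 2 * δ * Real.log 2 := by
    have h2 : Real.log 2 * condMI p ≤ Real.log 2 * δ :=
      mul_le_mul_of_nonneg_left hMI (le_of_lt hlog2)
    calc (∑ x, |P x - Q x|) ^ 2 ≤ 2 * ∑ x, P x * Real.log (P x / Q x) := hpin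
      _ = 2 * (Real.log 2 * condMI p) := by rw [hKL]
      _ ≤ 2 * (Real.log 2 * δ) := by linarith
      _ = 2 * δ * Real.log 2 := by ring
  have hL1nn : 0 ≤ ∑ x, |P x - Q x| := Finset.sum_nonneg fun x _ => abs_nonneg _
  have hL1 : ∑ x, |P x - Q x| ≤ Real.sqrt (2 * δ * Real.log 2) := by
    rw [← Real.sqrt_sq hL1nn]
    exact Real.sqrt_le_sqrt hD
  have hrw1 : (∑ u, ∑ x1, ∑ x2, p u x1 x2 * chOutEnt M x1 x2)
      = ∑ x : U × X1 × X2, P x * chOutEnt M x.2.1 x.2.2 := by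
    simp only [hPdef, Fintype.sum_prod_type]
  have hrw2 : (∑ u, ∑ x1, ∑ x2,
        (∑ a, ∑ b, p u a b) *
          ((∑ b, p u x1 b) / (∑ a, ∑ b, p u a b)) *
          ((∑ a, p u a x2) / (∑ a, ∑ b, p u a b)) * chOutEnt M x1 x2)
      = ∑ x : U × X1 × X2, Q x * chOutEnt M x.2.1 x.2.2 := by
    simp only [hQdef, Fintype.sum_prod_type]
  rw [hrw1, hrw2, ← Finset.sum_sub_distrib]
  have habs : |∑ x : U × X1 × X2, (P x * chOutEnt M x.2.1 x.2.2
      - Q x * chOutEnt M x.2.1 x.2.2)| ≤ (∑ x, |P x - Q x|) * L := by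
    calc |∑ x : U × X1 × X2, (P x * chOutEnt M x.2.1 x.2.2 - Q x * chOutEnt M x.2.1 x.2.2)|
        ≤ ∑ x : U × X1 × X2, |P x * chOutEnt M x.2.1 x.2.2 - Q x * chOutEnt M x.2.1 x.2.2| :=
          Finset.abs_sum_le_sum_abs _ _
      _ ≤ ∑ x : U × X1 × X2, |P x - Q x| * L := by
          apply Finset.sum_le_sum
          intro x _
          rw [← sub_mul, abs_mul]
          apply mul_le_mul_of_nonneg_left _ (abs_nonneg _)
          rw [abs_of_nonneg (hf0 _ _)]
          exact hfL _ _
      _ = (∑ x, |P x - Q x|) * L := by rw [Finset.sum_mul]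
  calc |∑ x : U × X1 × X2, (P x * chOutEnt M x.2.1 x.2.2 - Q x * chOutEnt M x.2.1 x.2.2)|
      ≤ (∑ x, |P x - Q x|) * L := habs
    _ ≤ Real.sqrt (2 * δ * Real.log 2) * L := mul_le_mul_of_nonneg_right hL1 hL0
    _ = L * Real.sqrt (2 * δ * Real.log 2) := mul_comm _ _
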